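/- Fix θ ∈ (0,1] and suppose r(θ) > 0 and log r(θ) is finite. Then for every h > h_a(β) + (1/θ)·log r(θ), the quenched susceptibility is almost surely finite: ℙ(χ̂_h < ∞) = 1. In particular the quenched critical point is at most h_a(β) + (1/θ)·log r(θ) = h_a(β) − (1/θ)·log(1/r(θ)). -/

import Mathlib

open MeasureTheory Real ProbabilityTheory

/-- The Laplace transform `λ_β = 𝔼[e^{-βX}]` of the conductance law. -/
noncomputable def lam {Ω : Type*} [MeasurableSpace Ω] (P : Measure Ω) (X : Ω → ℝ) (β : ℝ) : ℝ :=
  ∫ ω, Real.exp (-β * X ω) ∂P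

/-- The annealed critical point `h_a(β) = log(ℓ-1) + log λ_β`. -/
noncomputable def annealedCP {Ω : Type*} [MeasurableSpace Ω] (P : Measure Ω) (X : Ω → ℝ)
    (ℓ : ℕ) (β : ℝ) : ℝ :=
  Real.log ((ℓ : ℝ) - 1) + Real.log (lam P X β)

/-- A (nonempty) word indexing an edge of the rooted degree-`ℓ` tree: a first letter in
`Fin ℓ` together with a list of subsequent letters in `Fin (ℓ-1)`.  The `n`-step
self-avoiding paths from the root correspond to the words of length `n` (list length
`n-1`), and the edges along such a path are the nonempty prefixes of the word. -/
abbrev TreeWord (ℓ : ℕ) : Type := Fin ℓ × List (Fin (ℓ - 1))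

/-- The normalized partition function
`Z_n = (ℓ(ℓ-1)^{n-1} λ_β^n)⁻¹ Σ_{|w|=n} exp(-β Σ_{k=1}^n X_{(w_1,…,w_k)})`, with `Z_0 = 1`.
The inner sums run over the first letter `a : Fin ℓ` and the tail `g`, and the `k`-th edge
of the path `w = (a, List.ofFn g)` is the prefix `(a, (List.ofFn g).take (k-1))`. -/
noncomputable def Zpart {Ω : Type*} (ℓ : ℕ) (β lamβ : ℝ)
    (Xf : TreeWord ℓ → Ω → ℝ) : ℕ → Ω → ℝ
  | 0 => fun _ => 1
  | n + 1 => fun ω =>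
      ((ℓ : ℝ) * ((ℓ : ℝ) - 1) ^ n * lamβ ^ (n + 1))⁻¹ *
        ∑ a : Fin ℓ, ∑ g : Fin n → Fin (ℓ - 1),
          Real.exp (-β * ∑ k ∈ Finset.range (n + 1), Xf (a, (List.ofFn g).take k) ω)

/-- The contribution to the quenched susceptibility of the `n`-step self-avoiding paths:
`Σ_{|w|=n} exp(-Σ_{k=1}^n (h + β X_{(w_1,…,w_k)}))`, the `n = 0` term being `1`. -/
noncomputable def suscTerm {Ω : Type*} (ℓ : ℕ) (β h : ℝ)
    (Xf : TreeWord ℓ → Ω → ℝ) : ℕ → Ω → ℝ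
  | 0 => fun _ => 1
  | n + 1 => fun ω =>
      ∑ a : Fin ℓ, ∑ g : Fin n → Fin (ℓ - 1),
        Real.exp (-∑ k ∈ Finset.range (n + 1), (h + β * Xf (a, (List.ofFn g).take k) ω))

/-- The quenched susceptibility `χ̂_h = Σ_{n≥0} Σ_{|w|=n} exp(-Σ_{k=1}^n (h + β X_w^{(k)}))`,
as a sum in `[0,∞]`. -/
noncomputable def susc {Ω : Type*} (ℓ : ℕ) (β h : ℝ)
    (Xf : TreeWord ℓ → Ω → ℝ) (ω : Ω) : ENNReal :=
  ∑' n : ℕ, ENNReal.ofReal (suscTerm ℓ β h Xf n ω)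

/-- The fractional-moment rate `r(θ) = (ℓ-1)·𝔼[(e^{-βX}/((ℓ-1)λ_β))^θ]`. -/
noncomputable def rDS {Ω : Type*} [MeasurableSpace Ω] (P : Measure Ω) (X : Ω → ℝ)
    (ℓ : ℕ) (β θ : ℝ) : ℝ :=
  ((ℓ : ℝ) - 1) * ∫ ω, (Real.exp (-β * X ω) / (((ℓ : ℝ) - 1) * lam P X β)) ^ θ ∂P


lemma rpow_finsetSum_le {ι : Type*} (s : Finset ι) (f : ι → ENNReal) {p : ℝ}
    (hp0 : 0 < p) (hp1 : p ≤ 1) :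
    (∑ i ∈ s, f i) ^ p ≤ ∑ i ∈ s, f i ^ p := by
  classical
  induction s using Finset.cons_induction with
  | empty => simp [ENNReal.zero_rpow_of_pos hp0]
  | cons i s hi ih =>
      rw [Finset.sum_cons, Finset.sum_cons]
      exact (ENNReal.rpow_add_le_add_rpow _ _ hp0.le hp1).trans (add_le_add le_rfl ih)

lemma lintegral_finset_prod_indep {Ω ι : Type*} [MeasurableSpace Ω] {P : Measure Ω}
    [IsProbabilityMeasure P]
    (G : ι → Ω → ENNReal) (hmeas : ∀ i, Measurable (G i))
    (hind : iIndepFun G P) (s : Finset ι) :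
    ∫⁻ ω, ∏ i ∈ s, G i ω ∂P = ∏ i ∈ s, ∫⁻ ω, G i ω ∂P := by
  classical
  induction s using Finset.cons_induction with
  | empty => simp
  | cons i s hi ih =>
      simp only [Finset.prod_cons]
      have h1 : IndepFun (G i) (fun ω => ∏ j ∈ s, G j ω) P := by
        have := (hind.indepFun_finsetProd_of_notMem hmeas hi).symm
        simpa [Finset.prod_fn] using this
      have h2 := lintegral_mul_eq_lintegral_mul_lintegral_of_indepFun (hmeas i)
        (Finset.measurable_prod s fun j _ => hmeas j) h1
      simp only [Pi.mul_apply] at h2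
      rw [h2, ih]

set_option maxHeartbeats 2000000 in
/-- Upper bound on the quenched critical point: for `θ ∈ (0,1]` with `r(θ) > 0`, the
quenched susceptibility is a.s. finite for every `h > h_a(β) + (1/θ)·log r(θ)`. -/
theorem quenched_susc_finite {Ω : Type*} [MeasurableSpace Ω] (P : Measure Ω)
    [IsProbabilityMeasure P] (ℓ : ℕ) (hℓ : 3 ≤ ℓ) (β : ℝ) (hβ : 0 < β)
    (X : Ω → ℝ) (hX : Measurable X)
    (θ : ℝ) (hθ : θ ∈ Set.Ioc (0 : ℝ) 1)
    (hInt : Integrable (fun ω => Real.exp (-β * X ω)) P)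
    (hIntθ : Integrable (fun ω => Real.exp (-(θ * β) * X ω)) P)
    (hr : 0 < rDS P X ℓ β θ)
    (Xf : TreeWord ℓ → Ω → ℝ) (hXf : ∀ w, Measurable (Xf w))
    (hindep : iIndepFun Xf P)
    (hident : ∀ w, IdentDistrib (Xf w) X P P) :
    ∀ h : ℝ, annealedCP P X ℓ β + (1 / θ) * Real.log (rDS P X ℓ β θ) < h →
      P {ω | susc ℓ β h Xf ω < ⊤} = 1 := by
  classical
  intro h hh
  obtain ⟨hθ0, hθ1⟩ := hθ
  have hℓR : (3 : ℝ) ≤ (ℓ : ℝ) := by exact_mod_cast hℓ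
  have hl1 : (0 : ℝ) < (ℓ : ℝ) - 1 := by linarith
  haveI : NeZero P := ⟨IsProbabilityMeasure.ne_zero P⟩
  -- positivity of Laplace transforms
  have hlam_pos : 0 < lam P X β := by
    unfold lam
    exact integral_exp_pos hInt
  set lamθ : ℝ := ∫ ω, Real.exp (-(θ * β) * X ω) ∂P with hlamθdef
  have hlamθ_pos : 0 < lamθ := integral_exp_pos hIntθ
  set c : ℝ := ((ℓ : ℝ) - 1) * lam P X β with hcdef
  have hc : 0 < c := mul_pos hl1 hlam_pos
  -- rewrite rDS
  have hrDS_eq : rDS P X ℓ β θ = ((ℓ : ℝ) - 1) * lamθ / c ^ θ := by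
    unfold rDS
    have hpt : ∀ ω, (Real.exp (-β * X ω) / (((ℓ : ℝ) - 1) * lam P X β)) ^ θ
        = Real.exp (-(θ * β) * X ω) * (c ^ θ)⁻¹ := by
      intro ω
      rw [← hcdef, Real.div_rpow (Real.exp_pos _).le hc.le, ← Real.exp_mul,
        show -β * X ω * θ = -(θ * β) * X ω by ring, div_eq_mul_inv]
    simp_rw [hpt]
    rw [integral_mul_const]
    rw [div_eq_mul_inv, mul_assoc]
  -- the key real inequality : K < 1
  set K : ℝ := ((ℓ : ℝ) - 1) * (Real.exp (-(θ * h)) * lamθ) with hKdef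
  have hK1 : K < 1 := by
    have h1 : annealedCP P X ℓ β = Real.log c := by
      unfold annealedCP
      rw [hcdef, Real.log_mul (ne_of_gt hl1) (ne_of_gt hlam_pos)]
    have h2 : Real.log (rDS P X ℓ β θ) = Real.log (((ℓ : ℝ) - 1) * lamθ) - θ * Real.log c := by
      rw [hrDS_eq, Real.log_div (ne_of_gt (mul_pos hl1 hlamθ_pos))
        (ne_of_gt (Real.rpow_pos_of_pos hc θ)), Real.log_rpow hc]
    rw [h1, h2] at hh
    have hmul := mul_lt_mul_of_pos_left hh hθ0
    have hA : Real.log (((ℓ : ℝ) - 1) * lamθ) < θ * h := by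
      have hθne : θ ≠ 0 := ne_of_gt hθ0
      calc Real.log (((ℓ : ℝ) - 1) * lamθ)
          = θ * (Real.log c + 1 / θ * (Real.log (((ℓ : ℝ) - 1) * lamθ) - θ * Real.log c)) := by
            field_simp
            ring
          _ < θ * h := hmul
    have hKlt : ((ℓ : ℝ) - 1) * lamθ < Real.exp (θ * h) :=
      (Real.log_lt_iff_lt_exp (mul_pos hl1 hlamθ_pos)).mp hA
    have := mul_lt_mul_of_pos_left hKlt (Real.exp_pos (-(θ * h)))
    calc K = Real.exp (-(θ * h)) * (((ℓ : ℝ) - 1) * lamθ) := by rw [hKdef]; ring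
      _ < Real.exp (-(θ * h)) * Real.exp (θ * h) := this
      _ = 1 := by rw [← Real.exp_add]; simp
  have hK0 : 0 ≤ K := by positivity
  -- the i.i.d. ENNReal-valued factors
  set G : TreeWord ℓ → Ω → ENNReal :=
    fun w ω => ENNReal.ofReal (Real.exp (-(θ * (h + β * Xf w ω)))) with hGdef
  have hGmeas : ∀ w, Measurable (G w) := by
    intro w
    exact ((((hXf w).const_mul β).const_add h).const_mul θ).neg.exp.ennreal_ofReal
  have hGindep : iIndepFun G P := by
    have := hindep.comp (fun _ x => ENNReal.ofReal (Real.exp (-(θ * (h + β * x)))))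
      (fun _ => (((measurable_id.const_mul β).const_add h).const_mul θ).neg.exp.ennreal_ofReal)
    exact this
  set E : ENNReal := ENNReal.ofReal (Real.exp (-(θ * h)) * lamθ) with hEdef
  have hGint : ∀ w, ∫⁻ ω, G w ω ∂P = E := by
    intro w
    have humeas : Measurable fun x : ℝ => Real.exp (-(θ * β) * x) :=
      (measurable_id.const_mul _).exp
    have hid : IdentDistrib (fun ω => Real.exp (-(θ * β) * Xf w ω))
        (fun ω => Real.exp (-(θ * β) * X ω)) P P := (hident w).comp humeas
    have hint1 : Integrable (fun ω => Real.exp (-(θ * β) * Xf w ω)) P :=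
      hid.integrable_iff.mpr hIntθ
    have heq : (fun ω => Real.exp (-(θ * (h + β * Xf w ω))))
        = fun ω => Real.exp (-(θ * h)) * Real.exp (-(θ * β) * Xf w ω) := by
      funext ω
      rw [← Real.exp_add]
      congr 1
      ring
    have hint2 : Integrable (fun ω => Real.exp (-(θ * (h + β * Xf w ω)))) P := by
      rw [heq]; exact hint1.const_mul _
    have := ofReal_integral_eq_lintegral_ofReal hint2
      (Filter.Eventually.of_forall fun ω => (Real.exp_pos _).le)
    rw [hGdef, ← this, heq, integral_const_mul, hid.integral_eq, ← hlamθdef, hEdef]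
  -- measurability of the susceptibility terms
  have meas_susc : ∀ n, Measurable (suscTerm ℓ β h Xf n) := by
    intro n
    cases n with
    | zero => exact measurable_const
    | succ m =>
      refine Finset.measurable_sum _ fun a _ => Finset.measurable_sum _ fun g _ => ?_
      exact (Finset.measurable_sum _ fun k _ => ((hXf _).const_mul β).const_add h).neg.exp
  -- the key moment bound
  have keymain : ∀ n : ℕ,
      ∫⁻ ω, (ENNReal.ofReal (suscTerm ℓ β h Xf (n + 1) ω)) ^ θ ∂P
        ≤ (ℓ : ENNReal) * ((ℓ - 1 : ℕ) : ENNReal) ^ n * E ^ (n + 1) := by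
    intro n
    have hpt : ∀ ω, (ENNReal.ofReal (suscTerm ℓ β h Xf (n + 1) ω)) ^ θ
        ≤ ∑ a : Fin ℓ, ∑ g : Fin n → Fin (ℓ - 1),
            ∏ k ∈ Finset.range (n + 1), G (a, (List.ofFn g).take k) ω := by
      intro ω
      simp only [suscTerm]
      rw [ENNReal.ofReal_sum_of_nonneg
        (fun a _ => Finset.sum_nonneg fun g _ => (Real.exp_pos _).le)]
      refine (rpow_finsetSum_le _ _ hθ0 hθ1).trans (Finset.sum_le_sum fun a _ => ?_)
      rw [ENNReal.ofReal_sum_of_nonneg (fun g _ => (Real.exp_pos _).le)]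
      refine (rpow_finsetSum_le _ _ hθ0 hθ1).trans (Finset.sum_le_sum fun g _ => ?_)
      rw [ENNReal.ofReal_rpow_of_pos (Real.exp_pos _), ← Real.exp_mul]
      have hS : (-∑ k ∈ Finset.range (n + 1), (h + β * Xf (a, (List.ofFn g).take k) ω)) * θ
          = ∑ k ∈ Finset.range (n + 1), -(θ * (h + β * Xf (a, (List.ofFn g).take k) ω)) := by
        rw [neg_mul, Finset.sum_mul, ← Finset.sum_neg_distrib]
        exact Finset.sum_congr rfl fun k _ => by ring
      rw [hS, Real.exp_sum, ENNReal.ofReal_prod_of_nonneg (fun k _ => (Real.exp_pos _).le)]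
    calc ∫⁻ ω, (ENNReal.ofReal (suscTerm ℓ β h Xf (n + 1) ω)) ^ θ ∂P
        ≤ ∫⁻ ω, ∑ a : Fin ℓ, ∑ g : Fin n → Fin (ℓ - 1),
            ∏ k ∈ Finset.range (n + 1), G (a, (List.ofFn g).take k) ω ∂P :=
          lintegral_mono hpt
      _ = ∑ a : Fin ℓ, ∑ g : Fin n → Fin (ℓ - 1),
            ∫⁻ ω, ∏ k ∈ Finset.range (n + 1), G (a, (List.ofFn g).take k) ω ∂P := by
          rw [lintegral_finset_sum _ (fun a _ => Finset.measurable_sum _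
            (fun g _ => Finset.measurable_prod _ fun k _ => hGmeas _))]
          exact Finset.sum_congr rfl fun a _ => lintegral_finset_sum _
            (fun g _ => Finset.measurable_prod _ fun k _ => hGmeas _)
      _ = ∑ a : Fin ℓ, ∑ g : Fin n → Fin (ℓ - 1), E ^ (n + 1) := by
          refine Finset.sum_congr rfl fun a _ => Finset.sum_congr rfl fun g _ => ?_
          have hinj : ∀ k1 ∈ Finset.range (n + 1), ∀ k2 ∈ Finset.range (n + 1),
              ((a, (List.ofFn g).take k1) : TreeWord ℓ) = (a, (List.ofFn g).take k2)
                → k1 = k2 := by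
            intro k1 h1 k2 h2 heq
            have h1' := Finset.mem_range.mp h1
            have h2' := Finset.mem_range.mp h2
            have := congrArg (fun w : TreeWord ℓ => w.2.length) heq
            simp only [List.length_take, List.length_ofFn] at this
            omega
          have hprod : ∀ ω, ∏ k ∈ Finset.range (n + 1), G (a, (List.ofFn g).take k) ω
              = ∏ w ∈ (Finset.range (n + 1)).image
                  (fun k => ((a, (List.ofFn g).take k) : TreeWord ℓ)), G w ω :=
            fun ω => (Finset.prod_image (f := fun w => G w ω) hinj).symm
          simp_rw [hprod]
          rw [lintegral_finset_prod_indep G hGmeas hGindep,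
            Finset.prod_congr rfl (fun w _ => hGint w), Finset.prod_const,
            Finset.card_image_of_injOn hinj, Finset.card_range]
      _ = (ℓ : ENNReal) * ((ℓ - 1 : ℕ) : ENNReal) ^ n * E ^ (n + 1) := by
          simp only [Finset.sum_const, Finset.card_univ, Fintype.card_fun, Fintype.card_fin,
            nsmul_eq_mul, Nat.cast_pow]
          ring
  -- summability of the fractional moments
  have hDE : ((ℓ - 1 : ℕ) : ENNReal) * E = ENNReal.ofReal K := by
    rw [← ENNReal.ofReal_natCast (ℓ - 1), ← ENNReal.ofReal_mul (Nat.cast_nonneg _), hKdef,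
      Nat.cast_sub (by omega : 1 ≤ ℓ), Nat.cast_one]
  have hDE1 : ((ℓ - 1 : ℕ) : ENNReal) * E < 1 := by
    rw [hDE]
    exact ENNReal.ofReal_lt_one.mpr hK1
  have hEne : E ≠ ⊤ := ENNReal.ofReal_ne_top
  have tmeas : ∀ n, Measurable fun ω => (ENNReal.ofReal (suscTerm ℓ β h Xf n ω)) ^ θ :=
    fun n => ((meas_susc n).ennreal_ofReal).pow_const θ
  have hsum : ∑' n, ∫⁻ ω, (ENNReal.ofReal (suscTerm ℓ β h Xf n ω)) ^ θ ∂P ≠ ⊤ := by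
    set A : ℕ → ENNReal := fun n => ∫⁻ ω, (ENNReal.ofReal (suscTerm ℓ β h Xf n ω)) ^ θ ∂P
      with hAdef
    have hsplit : ∑' n, A n = A 0 + ∑' n, A (n + 1) := by
      rw [← tsum_eq_zero_add']
      exact ENNReal.summable
    have h0 : A 0 = 1 := by
      rw [hAdef]
      have hpt0 : ∀ ω : Ω, (ENNReal.ofReal (suscTerm ℓ β h Xf 0 ω)) ^ θ = 1 := by
        intro ω
        simp [suscTerm]
      simp only [hpt0]
      simp
    have hgeom : ∑' n : ℕ, (((ℓ - 1 : ℕ) : ENNReal) * E) ^ n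
        = (1 - ((ℓ - 1 : ℕ) : ENNReal) * E)⁻¹ := ENNReal.tsum_geometric _
    have hb : ∑' n, A n ≤ 1 + (ℓ : ENNReal) * E * (1 - ((ℓ - 1 : ℕ) : ENNReal) * E)⁻¹ := by
      rw [hsplit, h0]
      refine add_le_add le_rfl ?_
      calc ∑' n, A (n + 1)
          ≤ ∑' n : ℕ, (ℓ : ENNReal) * ((ℓ - 1 : ℕ) : ENNReal) ^ n * E ^ (n + 1) :=
            ENNReal.tsum_le_tsum fun n => keymain n
        _ = ∑' n : ℕ, (ℓ : ENNReal) * E * (((ℓ - 1 : ℕ) : ENNReal) * E) ^ n := by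
            refine tsum_congr fun n => ?_
            rw [mul_pow, pow_succ]
            ring
        _ = (ℓ : ENNReal) * E * ∑' n : ℕ, (((ℓ - 1 : ℕ) : ENNReal) * E) ^ n :=
            ENNReal.tsum_mul_left
        _ = (ℓ : ENNReal) * E * (1 - ((ℓ - 1 : ℕ) : ENNReal) * E)⁻¹ := by rw [hgeom]
    refine ne_top_of_le_ne_top ?_ hb
    refine ENNReal.add_ne_top.mpr ⟨ENNReal.one_ne_top, ENNReal.mul_ne_top
      (ENNReal.mul_ne_top (ENNReal.natCast_ne_top ℓ) hEne) ?_⟩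
    rw [ENNReal.inv_ne_top]
    intro habs
    have hpos := tsub_pos_of_lt hDE1
    rw [habs] at hpos
    exact lt_irrefl 0 hpos
  have hY : ∀ᵐ ω ∂P, (∑' n, (ENNReal.ofReal (suscTerm ℓ β h Xf n ω)) ^ θ) < ⊤ := by
    refine ae_lt_top (Measurable.ennreal_tsum tmeas) ?_
    rwa [lintegral_tsum fun n => (tmeas n).aemeasurable]
  have hθinv : (1 : ℝ) ≤ 1 / θ := one_le_one_div hθ0 hθ1
  have hfin : ∀ᵐ ω ∂P, susc ℓ β h Xf ω < ⊤ := by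
    filter_upwards [hY] with ω hω
    set S : ENNReal := ∑' n, (ENNReal.ofReal (suscTerm ℓ β h Xf n ω)) ^ θ with hSdef
    have hS : S ≠ ⊤ := hω.ne
    have hexp0 : (0 : ℝ) ≤ 1 / θ - 1 := by linarith
    have hCne : S ^ (1 / θ - 1) ≠ ⊤ := ENNReal.rpow_ne_top_of_nonneg hexp0 hS
    have hbound : ∀ n, ENNReal.ofReal (suscTerm ℓ β h Xf n ω)
        ≤ (ENNReal.ofReal (suscTerm ℓ β h Xf n ω)) ^ θ * S ^ (1 / θ - 1) := by
      intro n
      set x : ENNReal := ENNReal.ofReal (suscTerm ℓ β h Xf n ω) with hxdef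
      have hx1 : x = (x ^ θ) ^ (1 / θ) := by
        rw [← ENNReal.rpow_mul, mul_one_div, div_self (ne_of_gt hθ0), ENNReal.rpow_one]
      have hx2 : (x ^ θ) ^ (1 / θ) = x ^ θ * (x ^ θ) ^ (1 / θ - 1) := by
        rw [show (1 : ℝ) / θ = 1 + (1 / θ - 1) by ring,
          ENNReal.rpow_add_of_nonneg _ _ zero_le_one hexp0, ENNReal.rpow_one]
        ring_nf
      calc x = x ^ θ * (x ^ θ) ^ (1 / θ - 1) := by rw [← hx2, ← hx1]
        _ ≤ x ^ θ * S ^ (1 / θ - 1) :=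
            mul_le_mul_right (ENNReal.rpow_le_rpow (ENNReal.le_tsum n) hexp0) _
    calc susc ℓ β h Xf ω
        ≤ ∑' n, (ENNReal.ofReal (suscTerm ℓ β h Xf n ω)) ^ θ * S ^ (1 / θ - 1) :=
          ENNReal.tsum_le_tsum hbound
      _ = S * S ^ (1 / θ - 1) := by rw [ENNReal.tsum_mul_right]
      _ < ⊤ := ENNReal.mul_lt_top hω (lt_top_iff_ne_top.mpr hCne)
  have hsetmeas : MeasurableSet {ω | susc ℓ β h Xf ω < ⊤} := by
    refine measurableSet_lt ?_ measurable_const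
    exact Measurable.ennreal_tsum fun n => (meas_susc n).ennreal_ofReal
  rw [← prob_compl_eq_zero_iff hsetmeas]
  have := ae_iff.mp hfin
  simpa [Set.compl_setOf] using this
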